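/- arXiv:2202.07216 — 3 statements merged into one kernel-verified Lean document; each statement's English description precedes it below -/
import Mathlib

section
/- Let n, k be integers with 1 ≤ k < n, K = {p ∈ [0,1]^n : Σ_i p_i = k}, and U ⊆ {1,…,n} with |U| = k. Then the function p ↦ 1 − f̄_U(p) is polynomially bounded on K. -/
open Finset

def cube (n : ℕ) : Set (Fin n → ℝ) := {p | ∀ i, 0 ≤ p i ∧ p i ≤ 1}

/-- The open face `F_{A,S,B}` of the hypercube, where `S` is the complement of `A ∪ B`. -/
def face {n : ℕ} (A B : Finset (Fin n)) : Set (Fin n → ℝ) :=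
  {p | (∀ i ∈ A, p i = 0) ∧ (∀ i ∈ B, p i = 1) ∧ ∀ i ∉ A ∪ B, 0 < p i ∧ p i < 1}

/-- `(1-p)^A · (p(1-p))^S · p^B` for the face `F_{A,S,B}`. -/
noncomputable def facePoly {n : ℕ} (A B : Finset (Fin n)) (p : Fin n → ℝ) : ℝ :=
  (∏ i ∈ A, (1 - p i)) * (∏ i ∈ (A ∪ B)ᶜ, p i * (1 - p i)) * (∏ i ∈ B, p i)
/-- A function `f : K → [0,1]` is polynomially bounded on the compact subdomain `K`. -/
def PolyBoundedOn {n : ℕ} (K : Set (Fin n → ℝ)) (f : (Fin n → ℝ) → ℝ) : Prop :=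
  ∃ (m : ℕ) (c : ℝ), 0 < c ∧ ∀ A B : Finset (Fin n), Disjoint A B →
    (∃ q ∈ K ∩ face A B, 0 < f q) →
    ∀ p ∈ K, c * facePoly A B p ^ m ≤ f p
/-- The domain `K = {p ∈ [0,1]^n : ∑ i, p i = k}`. -/
def Ksimplex (n k : ℕ) : Set (Fin n → ℝ) :=
  {p | (∀ i, 0 ≤ p i ∧ p i ≤ 1) ∧ ∑ i, p i = (k : ℝ)}

/-- `g_U(x) = (1/(n-k)) · ∏_{i∈U} x_i · ∏_{i∉U} (1-x_i) · ∑_{i∉U} x_i`. -/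
noncomputable def gSampford (n k : ℕ) (U : Finset (Fin n)) (x : Fin n → ℝ) : ℝ :=
  (1 / ((n : ℝ) - (k : ℝ))) * (∏ i ∈ U, x i) * (∏ i ∈ Uᶜ, (1 - x i)) * (∑ i ∈ Uᶜ, x i)

/-- `∑_{V ⊆ [n], |V| = k} g_V(x)`. -/
noncomputable def sumg (n k : ℕ) (x : Fin n → ℝ) : ℝ :=
  ∑ V ∈ Finset.powersetCard k (Finset.univ : Finset (Fin n)), gSampford n k V x

/-- The indicator vector `e_U` of a subset `U`. -/
def eU {n : ℕ} (U : Finset (Fin n)) : Fin n → ℝ := fun i => if i ∈ U then 1 else 0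
open Classical in
/-- The continuous completion `f̄_U` of `f_U = g_U / ∑_V g_V` on `K`. -/
noncomputable def fbar (n k : ℕ) (U : Finset (Fin n)) (x : Fin n → ℝ) : ℝ :=
  if x = eU U then 1
  else if ∃ V : Finset (Fin n), V.card = k ∧ x = eU V then 0
  else gSampford n k U x / sumg n k x


lemma prod_le_single {n : ℕ} (s : Finset (Fin n)) (f : Fin n → ℝ)
    (h : ∀ i ∈ s, 0 ≤ f i ∧ f i ≤ 1) {j : Fin n} (hj : j ∈ s) :
    ∏ i ∈ s, f i ≤ f j := by
  rw [← Finset.mul_prod_erase s f hj]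
  have h1 : (∏ i ∈ s.erase j, f i) ≤ 1 :=
    Finset.prod_le_one (fun i hi => (h i (Finset.mem_of_mem_erase hi)).1)
      (fun i hi => (h i (Finset.mem_of_mem_erase hi)).2)
  have h0 : (0:ℝ) ≤ ∏ i ∈ s.erase j, f i :=
    Finset.prod_nonneg (fun i hi => (h i (Finset.mem_of_mem_erase hi)).1)
  nlinarith [(h j hj).1]

lemma facePoly_eq {n : ℕ} (A B : Finset (Fin n)) (hAB : Disjoint A B) (p : Fin n → ℝ) :
    facePoly A B p = (∏ i ∈ Bᶜ, (1 - p i)) * ∏ i ∈ Aᶜ, p i := by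
  have hd := Finset.disjoint_left.mp hAB
  have h1 : A ∪ (A ∪ B)ᶜ = Bᶜ := by
    ext i; simp only [Finset.mem_union, Finset.mem_compl]
    constructor
    · rintro (hA | h); · exact fun hB => hd hA hB
      · exact fun hB => h (Or.inr hB)
    · intro hB; by_cases hA : i ∈ A
      · exact Or.inl hA
      · exact Or.inr (fun h => h.elim hA hB)
  have h2 : (A ∪ B)ᶜ ∪ B = Aᶜ := by
    ext i; simp only [Finset.mem_union, Finset.mem_compl]
    constructor
    · rintro (h | hB); · exact fun hA => h (Or.inl hA)
      · exact fun hA => hd hA hB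
    · intro hA; by_cases hB : i ∈ B
      · exact Or.inr hB
      · exact Or.inl (fun h => h.elim hA hB)
  have d1 : Disjoint A (A ∪ B)ᶜ := by
    rw [Finset.disjoint_left]; intro a ha h; exact (Finset.mem_compl.mp h) (Finset.mem_union_left _ ha)
  have d2 : Disjoint (A ∪ B)ᶜ B := by
    rw [Finset.disjoint_right]; intro a ha h; exact (Finset.mem_compl.mp h) (Finset.mem_union_right _ ha)
  unfold facePoly
  rw [Finset.prod_mul_distrib, ← h1, ← h2, Finset.prod_union d1, Finset.prod_union d2]
  ring

lemma facePoly_nonneg {n : ℕ} (A B : Finset (Fin n)) (p : Fin n → ℝ)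
    (hp : ∀ i, 0 ≤ p i ∧ p i ≤ 1) : 0 ≤ facePoly A B p := by
  unfold facePoly
  have h1 : (0:ℝ) ≤ ∏ i ∈ A, (1 - p i) := Finset.prod_nonneg (fun i _ => by linarith [(hp i).2])
  have h2 : (0:ℝ) ≤ ∏ i ∈ (A ∪ B)ᶜ, p i * (1 - p i) :=
    Finset.prod_nonneg (fun i _ => mul_nonneg (hp i).1 (by linarith [(hp i).2]))
  have h3 : (0:ℝ) ≤ ∏ i ∈ B, p i := Finset.prod_nonneg (fun i _ => (hp i).1)
  positivity

lemma facePoly_le_one {n : ℕ} (A B : Finset (Fin n)) (p : Fin n → ℝ)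
    (hp : ∀ i, 0 ≤ p i ∧ p i ≤ 1) : facePoly A B p ≤ 1 := by
  unfold facePoly
  have h1 : (∏ i ∈ A, (1 - p i)) ≤ 1 :=
    Finset.prod_le_one (fun i _ => by linarith [(hp i).2]) (fun i _ => by linarith [(hp i).1])
  have h2 : (∏ i ∈ (A ∪ B)ᶜ, p i * (1 - p i)) ≤ 1 :=
    Finset.prod_le_one (fun i _ => mul_nonneg (hp i).1 (by linarith [(hp i).2]))
      (fun i _ => mul_le_one₀ (hp i).2 (by linarith [(hp i).1, (hp i).2]) (by linarith [(hp i).1, (hp i).2]))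
  have g1 : (0:ℝ) ≤ ∏ i ∈ A, (1 - p i) := Finset.prod_nonneg (fun i _ => by linarith [(hp i).2])
  have g2 : (0:ℝ) ≤ ∏ i ∈ (A ∪ B)ᶜ, p i * (1 - p i) :=
    Finset.prod_nonneg (fun i _ => mul_nonneg (hp i).1 (by linarith [(hp i).2]))
  have h3 : (∏ i ∈ B, p i) ≤ 1 :=
    Finset.prod_le_one (fun i _ => (hp i).1) (fun i _ => (hp i).2)
  have g3 : (0:ℝ) ≤ ∏ i ∈ B, p i := Finset.prod_nonneg (fun i _ => (hp i).1)
  exact mul_le_one₀ (mul_le_one₀ h1 g2 h2) g3 h3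

lemma facePoly_le_left {n : ℕ} (A B : Finset (Fin n)) (hAB : Disjoint A B) (p : Fin n → ℝ)
    (hp : ∀ i, 0 ≤ p i ∧ p i ≤ 1) {j : Fin n} (hj : j ∉ B) :
    facePoly A B p ≤ 1 - p j := by
  rw [facePoly_eq A B hAB p]
  have h1 : (∏ i ∈ Bᶜ, (1 - p i)) ≤ 1 - p j :=
    prod_le_single _ _ (fun i _ => ⟨by linarith [(hp i).2], by linarith [(hp i).1]⟩)
      (Finset.mem_compl.mpr hj)
  have h2 : (∏ i ∈ Aᶜ, p i) ≤ 1 :=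
    Finset.prod_le_one (fun i _ => (hp i).1) (fun i _ => (hp i).2)
  have g1 : (0:ℝ) ≤ ∏ i ∈ Bᶜ, (1 - p i) := Finset.prod_nonneg (fun i _ => by linarith [(hp i).2])
  have g2 : (0:ℝ) ≤ ∏ i ∈ Aᶜ, p i := Finset.prod_nonneg (fun i _ => (hp i).1)
  nlinarith [(hp j).1, (hp j).2]

lemma facePoly_le_right {n : ℕ} (A B : Finset (Fin n)) (hAB : Disjoint A B) (p : Fin n → ℝ)
    (hp : ∀ i, 0 ≤ p i ∧ p i ≤ 1) {j : Fin n} (hj : j ∉ A) :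
    facePoly A B p ≤ p j := by
  rw [facePoly_eq A B hAB p]
  have h1 : (∏ i ∈ Aᶜ, p i) ≤ p j :=
    prod_le_single _ _ (fun i _ => ⟨(hp i).1, (hp i).2⟩) (Finset.mem_compl.mpr hj)
  have h2 : (∏ i ∈ Bᶜ, (1 - p i)) ≤ 1 :=
    Finset.prod_le_one (fun i _ => by linarith [(hp i).2]) (fun i _ => by linarith [(hp i).1])
  have g1 : (0:ℝ) ≤ ∏ i ∈ Bᶜ, (1 - p i) := Finset.prod_nonneg (fun i _ => by linarith [(hp i).2])
  have g2 : (0:ℝ) ≤ ∏ i ∈ Aᶜ, p i := Finset.prod_nonneg (fun i _ => (hp i).1)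
  nlinarith [(hp j).1]

lemma gS_nonneg {n k : ℕ} (hkn : k < n) (V : Finset (Fin n)) (p : Fin n → ℝ)
    (hp : ∀ i, 0 ≤ p i ∧ p i ≤ 1) : 0 ≤ gSampford n k V p := by
  unfold gSampford
  have hnk : (0:ℝ) < (n:ℝ) - (k:ℝ) := by
    have : (k:ℝ) < (n:ℝ) := by exact_mod_cast hkn
    linarith
  have h1 : (0:ℝ) ≤ ∏ i ∈ V, p i := Finset.prod_nonneg (fun i _ => (hp i).1)
  have h2 : (0:ℝ) ≤ ∏ i ∈ Vᶜ, (1 - p i) := Finset.prod_nonneg (fun i _ => by linarith [(hp i).2])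
  have h3 : (0:ℝ) ≤ ∑ i ∈ Vᶜ, p i := Finset.sum_nonneg (fun i _ => (hp i).1)
  positivity

/-- On K: `∑_{i∈U}(1 - p i) = ∑_{i∈Uᶜ} p i` when `|U| = k` and `∑ p = k`. -/
lemma sum_one_sub_eq {n k : ℕ} (U : Finset (Fin n)) (hU : U.card = k) (p : Fin n → ℝ)
    (hsum : ∑ i, p i = (k:ℝ)) : ∑ i ∈ U, (1 - p i) = ∑ i ∈ Uᶜ, p i := by
  have h : ∑ i ∈ U, p i + ∑ i ∈ Uᶜ, p i = (k:ℝ) := by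
    rw [Finset.sum_add_sum_compl]; exact hsum
  have h2 : ∑ i ∈ U, (1 - p i) = (U.card : ℝ) - ∑ i ∈ U, p i := by
    rw [Finset.sum_sub_distrib, Finset.sum_const, nsmul_eq_mul, mul_one]
  rw [h2, hU]; linarith

/-- Key scalar inequality. -/
lemma key_ineq {n : ℕ} (U : Finset (Fin n)) (p : Fin n → ℝ)
    (hp : ∀ i ∈ U, 0 ≤ p i ∧ p i ≤ 1) (a s' : ℝ) (ha0 : 0 ≤ a) (ha1 : a ≤ 1) (hs' : 0 ≤ s')
    (hsum : ∑ i ∈ U, (1 - p i) = a + s') :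
    a * (1 - a) * (a + s') ≤ ∑ i ∈ U, (1 - p i) * (p i + s') := by
  have hexp : ∑ i ∈ U, (1 - p i) * (p i + s')
      = (∑ i ∈ U, (1 - p i) * p i) + (a + s') * s' := by
    have h : ∀ i ∈ U, (1 - p i) * (p i + s') = (1 - p i) * p i + (1 - p i) * s' :=
      fun i _ => by ring
    rw [Finset.sum_congr rfl h, Finset.sum_add_distrib, ← Finset.sum_mul, hsum]
  set S : ℝ := a + s' with hS
  set Q : ℝ := ∑ i ∈ U, (1 - p i) * p i with hQ
  have hQ0 : 0 ≤ Q := Finset.sum_nonneg (fun i hi => mul_nonneg (by linarith [(hp i hi).2]) (hp i hi).1)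
  have hS0 : 0 ≤ S := by rw [hS]; linarith
  rw [hexp]
  rcases le_or_gt S 1 with hSle | hSgt
  · -- each p i ≥ 1 - S, so Q ≥ (1-S)*S
    have hQge : (1 - S) * S ≤ Q := by
      have hmain : ∀ i ∈ U, (1 - p i) * (1 - S) ≤ (1 - p i) * p i := by
        intro i hi
        have hle : 1 - p i ≤ S := by
          rw [← hsum]
          exact Finset.single_le_sum (f := fun i => 1 - p i)
            (fun j hj => sub_nonneg.mpr (hp j hj).2) hi
        nlinarith [(hp i hi).1, (hp i hi).2]
      calc (1 - S) * S = ∑ i ∈ U, (1 - p i) * (1 - S) := by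
            rw [← Finset.sum_mul, hsum]; ring
        _ ≤ Q := Finset.sum_le_sum hmain
    nlinarith [mul_nonneg hS0 (sq_nonneg (1 - a))]
  · nlinarith [mul_nonneg (mul_nonneg hS0 hs') (by linarith : (0:ℝ) ≤ 1 - a),
      mul_nonneg (mul_nonneg hS0 ha0) (by linarith : (0:ℝ) ≤ S - 1)]

lemma swap_out {n k : ℕ} (hkn : k < n) (U : Finset (Fin n)) (hU : U.card = k)
    (p : Fin n → ℝ) (hp : ∀ i, 0 ≤ p i ∧ p i ≤ 1) (hsum : ∑ i, p i = (k:ℝ))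
    {j : Fin n} (hj : j ∉ U) :
    p j ^ 2 * gSampford n k U p ≤ ∑ i ∈ U, gSampford n k (insert j (U.erase i)) p := by
  have hc0 : (0:ℝ) ≤ 1 / ((n:ℝ) - (k:ℝ)) := by
    have h : (k:ℝ) < (n:ℝ) := by exact_mod_cast hkn
    apply div_nonneg zero_le_one; linarith
  set c0 : ℝ := 1 / ((n:ℝ) - (k:ℝ)) with hc0def
  set P' : ℝ := ∏ i ∈ Uᶜ.erase j, (1 - p i) with hP'def
  set S' : ℝ := ∑ i ∈ Uᶜ.erase j, p i with hS'def
  set PU : ℝ := ∏ i ∈ U, p i with hPUdef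
  have hjc : j ∈ Uᶜ := Finset.mem_compl.mpr hj
  have hPc : ∏ i ∈ Uᶜ, (1 - p i) = (1 - p j) * P' := (Finset.mul_prod_erase _ _ hjc).symm
  have hSc : ∑ i ∈ Uᶜ, p i = p j + S' := (Finset.add_sum_erase _ _ hjc).symm
  have hP'0 : 0 ≤ P' := Finset.prod_nonneg (fun i _ => by linarith [(hp i).2])
  have hS'0 : 0 ≤ S' := Finset.sum_nonneg (fun i _ => (hp i).1)
  have hPU0 : 0 ≤ PU := Finset.prod_nonneg (fun i _ => (hp i).1)
  have hstep : ∀ i ∈ U,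
      c0 * (p j * (PU * ((1 - p i) * (P' * (p i + S'))))) ≤
        gSampford n k (insert j (U.erase i)) p := by
    intro i hi
    have hij : i ≠ j := fun h => hj (h ▸ hi)
    have hji : j ∉ U.erase i := fun h => hj (Finset.mem_of_mem_erase h)
    have hii' : i ∉ (Uᶜ.erase j) := fun h => (Finset.mem_compl.mp (Finset.mem_of_mem_erase h)) hi
    have hcomp : (insert j (U.erase i))ᶜ = insert i (Uᶜ.erase j) := by
      ext x
      simp only [Finset.mem_insert, Finset.mem_erase, Finset.mem_compl]
      constructor
      · intro h
        by_cases hx : x = i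
        · exact Or.inl hx
        · exact Or.inr ⟨fun hxj => h (Or.inl hxj), fun hxU => h (Or.inr ⟨hx, hxU⟩)⟩
      · rintro (rfl | ⟨hxj, hxU⟩)
        · rintro (h | ⟨h1, h2⟩)
          · exact hij h
          · exact h1 rfl
        · rintro (h | ⟨h1, h2⟩)
          · exact hxj h
          · exact hxU h2
    have hprod : ∏ x ∈ insert j (U.erase i), p x = p j * ∏ x ∈ U.erase i, p x :=
      Finset.prod_insert hji
    have hprodc : ∏ x ∈ (insert j (U.erase i))ᶜ, (1 - p x) = (1 - p i) * P' := by
      rw [hcomp, Finset.prod_insert hii']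
    have hsumc : ∑ x ∈ (insert j (U.erase i))ᶜ, p x = p i + S' := by
      rw [hcomp, Finset.sum_insert hii']
    have hPUe : PU = p i * ∏ x ∈ U.erase i, p x := (Finset.mul_prod_erase _ _ hi).symm
    have hE0 : (0:ℝ) ≤ ∏ x ∈ U.erase i, p x :=
      Finset.prod_nonneg (fun x _ => (hp x).1)
    have h1 : PU ≤ ∏ x ∈ U.erase i, p x := by
      rw [hPUe]; nlinarith [(hp i).1, (hp i).2]
    have hnn : (0:ℝ) ≤ c0 * (p j * ((1 - p i) * (P' * (p i + S')))) := by
      have h1 := (hp i).1; have h2 := (hp i).2; have h3 := (hp j).1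
      apply mul_nonneg hc0
      apply mul_nonneg h3
      apply mul_nonneg (by linarith)
      exact mul_nonneg hP'0 (by linarith)
    unfold gSampford
    rw [hprod, hprodc, hsumc]
    calc c0 * (p j * (PU * ((1 - p i) * (P' * (p i + S')))))
        = (c0 * (p j * ((1 - p i) * (P' * (p i + S'))))) * PU := by ring
      _ ≤ (c0 * (p j * ((1 - p i) * (P' * (p i + S'))))) * (∏ x ∈ U.erase i, p x) :=
          mul_le_mul_of_nonneg_left h1 hnn
      _ = c0 * (p j * ∏ x ∈ U.erase i, p x) * ((1 - p i) * P') * (p i + S') := by ring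
  have hsum' : ∑ i ∈ U, (1 - p i) = p j + S' := by
    rw [sum_one_sub_eq U hU p hsum, hSc]
  have hkey := key_ineq U p (fun i _ => hp i) (p j) S' (hp j).1 (hp j).2 hS'0 hsum'
  have hfold : ∑ i ∈ U, c0 * (p j * (PU * ((1 - p i) * (P' * (p i + S')))))
      = c0 * p j * PU * P' * ∑ i ∈ U, (1 - p i) * (p i + S') := by
    rw [Finset.mul_sum]
    exact Finset.sum_congr rfl (fun i _ => by ring)
  have hchain : c0 * p j * PU * P' * (p j * (1 - p j) * (p j + S'))
      ≤ ∑ i ∈ U, gSampford n k (insert j (U.erase i)) p := by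
    calc c0 * p j * PU * P' * (p j * (1 - p j) * (p j + S'))
        ≤ c0 * p j * PU * P' * ∑ i ∈ U, (1 - p i) * (p i + S') := by
          apply mul_le_mul_of_nonneg_left hkey
          exact mul_nonneg (mul_nonneg (mul_nonneg hc0 (hp j).1) hPU0) hP'0
      _ = ∑ i ∈ U, c0 * (p j * (PU * ((1 - p i) * (P' * (p i + S'))))) := hfold.symm
      _ ≤ _ := Finset.sum_le_sum hstep
  have hgU : p j ^ 2 * gSampford n k U p
      = c0 * p j * PU * P' * (p j * (1 - p j) * (p j + S')) := by
    unfold gSampford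
    rw [hPc, hSc]; ring
  rw [hgU]; exact hchain

lemma swap_in {n k : ℕ} (hkn : k < n) (U : Finset (Fin n))
    (p : Fin n → ℝ) (hp : ∀ i, 0 ≤ p i ∧ p i ≤ 1)
    {j : Fin n} (hj : j ∈ U) :
    (1 - p j) * gSampford n k U p ≤ ∑ i ∈ Uᶜ, gSampford n k (insert i (U.erase j)) p := by
  have hc0 : (0:ℝ) ≤ 1 / ((n:ℝ) - (k:ℝ)) := by
    have h : (k:ℝ) < (n:ℝ) := by exact_mod_cast hkn
    apply div_nonneg zero_le_one; linarith
  set c0 : ℝ := 1 / ((n:ℝ) - (k:ℝ)) with hc0def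
  set Pc : ℝ := ∏ i ∈ Uᶜ, (1 - p i) with hPcdef
  set PUe : ℝ := ∏ i ∈ U.erase j, p i with hPUedef
  have hPc0 : 0 ≤ Pc := Finset.prod_nonneg (fun i _ => by linarith [(hp i).2])
  have hPUe0 : 0 ≤ PUe := Finset.prod_nonneg (fun i _ => (hp i).1)
  have hPU : ∏ i ∈ U, p i = p j * PUe := (Finset.mul_prod_erase _ _ hj).symm
  have hstep : ∀ i ∈ Uᶜ,
      c0 * (PUe * ((1 - p j) * (Pc * (p j * p i)))) ≤
        gSampford n k (insert i (U.erase j)) p := by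
    intro i hi
    have hiU : i ∉ U := Finset.mem_compl.mp hi
    have hij : i ≠ j := fun h => hiU (h ▸ hj)
    have hie : i ∉ U.erase j := fun h => hiU (Finset.mem_of_mem_erase h)
    have hjc' : j ∉ Uᶜ.erase i := fun h => (Finset.mem_compl.mp (Finset.mem_of_mem_erase h)) hj
    have hcomp : (insert i (U.erase j))ᶜ = insert j (Uᶜ.erase i) := by
      ext x
      simp only [Finset.mem_insert, Finset.mem_erase, Finset.mem_compl]
      constructor
      · intro h
        by_cases hx : x = j
        · exact Or.inl hx
        · exact Or.inr ⟨fun hxi => h (Or.inl hxi), fun hxU => h (Or.inr ⟨hx, hxU⟩)⟩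
      · rintro (rfl | ⟨hxi, hxU⟩)
        · rintro (h | ⟨h1, h2⟩)
          · exact hij h.symm
          · exact h1 rfl
        · rintro (h | ⟨h1, h2⟩)
          · exact hxi h
          · exact hxU h2
    have hprod : ∏ x ∈ insert i (U.erase j), p x = p i * PUe := Finset.prod_insert hie
    have hprodc : ∏ x ∈ (insert i (U.erase j))ᶜ, (1 - p x)
        = (1 - p j) * ∏ x ∈ Uᶜ.erase i, (1 - p x) := by
      rw [hcomp, Finset.prod_insert hjc']
    have hsumc : ∑ x ∈ (insert i (U.erase j))ᶜ, p x
        = p j + ∑ x ∈ Uᶜ.erase i, p x := by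
      rw [hcomp, Finset.sum_insert hjc']
    set P'' : ℝ := ∏ x ∈ Uᶜ.erase i, (1 - p x) with hP''def
    set S'' : ℝ := ∑ x ∈ Uᶜ.erase i, p x with hS''def
    have hP''0 : 0 ≤ P'' := Finset.prod_nonneg (fun x _ => by linarith [(hp x).2])
    have hS''0 : 0 ≤ S'' := Finset.sum_nonneg (fun x _ => (hp x).1)
    have hPcle : Pc ≤ P'' := by
      have : Pc = (1 - p i) * P'' := (Finset.mul_prod_erase _ _ hi).symm
      nlinarith [(hp i).1, (hp i).2]
    unfold gSampford
    rw [hprod, hprodc, hsumc]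
    have hA : (0:ℝ) ≤ c0 * (PUe * ((1 - p j) * (p j * p i))) :=
      mul_nonneg hc0 (mul_nonneg hPUe0 (mul_nonneg (by linarith [(hp j).2])
        (mul_nonneg (hp j).1 (hp i).1)))
    calc c0 * (PUe * ((1 - p j) * (Pc * (p j * p i))))
        = (c0 * (PUe * ((1 - p j) * (p j * p i)))) * Pc := by ring
      _ ≤ (c0 * (PUe * ((1 - p j) * (p j * p i)))) * P'' := mul_le_mul_of_nonneg_left hPcle hA
      _ = (c0 * (PUe * ((1 - p j) * (P'' * p i)))) * p j := by ring
      _ ≤ (c0 * (PUe * ((1 - p j) * (P'' * p i)))) * (p j + S'') := by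
          apply mul_le_mul_of_nonneg_left (by linarith)
          exact mul_nonneg hc0 (mul_nonneg hPUe0 (mul_nonneg (by linarith [(hp j).2])
            (mul_nonneg hP''0 (hp i).1)))
      _ = c0 * (p i * PUe) * ((1 - p j) * P'') * (p j + S'') := by ring
  calc (1 - p j) * gSampford n k U p
      = ∑ i ∈ Uᶜ, c0 * (PUe * ((1 - p j) * (Pc * (p j * p i)))) := by
        unfold gSampford
        rw [hPU, Finset.mul_sum, Finset.mul_sum]
        exact Finset.sum_congr rfl (fun i _ => by ring)
    _ ≤ _ := Finset.sum_le_sum hstep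

lemma sum_swaps_le {n k : ℕ} (hkn : k < n) (U : Finset (Fin n)) (p : Fin n → ℝ)
    (hp : ∀ i, 0 ≤ p i ∧ p i ≤ 1) (s : Finset (Fin n)) (σ : Fin n → Finset (Fin n))
    (hinj : ∀ i ∈ s, ∀ i' ∈ s, σ i = σ i' → i = i')
    (hmem : ∀ i ∈ s, σ i ∈ (Finset.powersetCard k (Finset.univ : Finset (Fin n))).erase U) :
    ∑ i ∈ s, gSampford n k (σ i) p ≤
      ∑ V ∈ (Finset.powersetCard k (Finset.univ : Finset (Fin n))).erase U, gSampford n k V p := by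
  have himg : ∑ i ∈ s, gSampford n k (σ i) p
      = ∑ V ∈ s.image σ, gSampford n k V p := (Finset.sum_image (f := fun V => gSampford n k V p) hinj).symm
  rw [himg]
  apply Finset.sum_le_sum_of_subset_of_nonneg
  · intro V hV
    obtain ⟨i, hi, rfl⟩ := Finset.mem_image.mp hV
    exact hmem i hi
  · intro V _ _
    exact gS_nonneg hkn V p hp

lemma vertex_of_no_frac {n k : ℕ} (p : Fin n → ℝ) (hsum : ∑ i, p i = (k:ℝ))
    (h01 : ∀ i, p i = 0 ∨ p i = 1) : ∃ V : Finset (Fin n), V.card = k ∧ p = eU V := by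
  classical
  set V : Finset (Fin n) := Finset.univ.filter (fun i => p i = 1) with hV
  have hpe : p = eU V := by
    funext i
    rcases h01 i with h | h <;> simp [eU, hV, h]
  have hcard : (V.card : ℝ) = (k : ℝ) := by
    rw [← hsum]
    have : ∑ i, p i = ∑ i ∈ V, p i := by
      apply (Finset.sum_subset (Finset.subset_univ V) _).symm
      intro i _ hi
      rcases h01 i with h | h
      · exact h
      · exact absurd (Finset.mem_filter.mpr ⟨Finset.mem_univ i, h⟩) hi
    rw [this, Finset.sum_congr rfl (fun i hi => (Finset.mem_filter.mp hi).2),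
      Finset.sum_const, nsmul_eq_mul, mul_one]
  exact ⟨V, by exact_mod_cast hcard, hpe⟩

lemma sumg_pos {n k : ℕ} (hkn : k < n) (p : Fin n → ℝ)
    (hp : ∀ i, 0 ≤ p i ∧ p i ≤ 1) (hsum : ∑ i, p i = (k:ℝ))
    (hfrac : ∃ i, 0 < p i ∧ p i < 1) : 0 < sumg n k p := by
  classical
  obtain ⟨i0, hi0⟩ := hfrac
  set P : Finset (Fin n) := Finset.univ.filter (fun i => p i = 1) with hPdef
  set F : Finset (Fin n) := Finset.univ.filter (fun i => 0 < p i ∧ p i < 1) with hFdef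
  have hFP : F ⊆ Pᶜ := by
    intro i hi
    rw [Finset.mem_compl]
    intro hiP
    have h1 := (Finset.mem_filter.mp hi).2
    have h2 := (Finset.mem_filter.mp hiP).2
    linarith [h1.2]
  have hsplit : (P.card : ℝ) + ∑ i ∈ Pᶜ, p i = (k:ℝ) := by
    rw [← hsum, ← Finset.sum_add_sum_compl P p]
    congr 1
    rw [Finset.sum_congr rfl (fun i hi => (Finset.mem_filter.mp hi).2),
      Finset.sum_const, nsmul_eq_mul, mul_one]
  have hPcF : ∑ i ∈ Pᶜ, p i = ∑ i ∈ F, p i := by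
    apply (Finset.sum_subset hFP _).symm
    intro i hiPc hiF
    have hne1 : p i ≠ 1 := fun h =>
      (Finset.mem_compl.mp hiPc) (Finset.mem_filter.mpr ⟨Finset.mem_univ i, h⟩)
    by_contra hne0
    exact hiF (Finset.mem_filter.mpr ⟨Finset.mem_univ i,
      ⟨lt_of_le_of_ne (hp i).1 (Ne.symm hne0), lt_of_le_of_ne (hp i).2 hne1⟩⟩)
  have hi0F : i0 ∈ F := Finset.mem_filter.mpr ⟨Finset.mem_univ i0, hi0⟩
  have hFpos : 0 < ∑ i ∈ F, p i :=
    Finset.sum_pos' (fun i _ => (hp i).1) ⟨i0, hi0F, hi0.1⟩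
  have hPlt : P.card < k := by
    have : (P.card : ℝ) < (k:ℝ) := by rw [hPcF] at hsplit; linarith
    exact_mod_cast this
  set d : ℕ := k - P.card with hddef
  have hd1 : 1 ≤ d := by omega
  have hdk : P.card + d = k := by omega
  have hdsum : (d : ℝ) = ∑ i ∈ F, p i := by
    rw [hPcF] at hsplit
    have : (d:ℝ) = (k:ℝ) - (P.card:ℝ) := by
      rw [← hdk]; push_cast; ring
    linarith
  have hdF : d ≤ F.card := by
    have hle : ∑ i ∈ F, p i ≤ (F.card : ℝ) := by
      calc ∑ i ∈ F, p i ≤ ∑ i ∈ F, (1:ℝ) := Finset.sum_le_sum (fun i _ => (hp i).2)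
        _ = F.card := by rw [Finset.sum_const, nsmul_eq_mul, mul_one]
    have : (d:ℝ) ≤ (F.card:ℝ) := by rw [hdsum]; exact hle
    exact_mod_cast this
  obtain ⟨W, hWF, hWcard⟩ := Finset.exists_subset_card_eq hdF
  have hWne : W.Nonempty := Finset.card_pos.mp (by omega)
  have hPW : Disjoint P W := by
    rw [Finset.disjoint_left]
    intro a haP haW
    exact (Finset.mem_compl.mp (hFP (hWF haW))) haP
  set V : Finset (Fin n) := P ∪ W with hVdef
  have hVcard : V.card = k := by
    rw [hVdef, Finset.card_union_of_disjoint hPW, hWcard, hdk]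
  have hVmem : V ∈ Finset.powersetCard k (Finset.univ : Finset (Fin n)) := by
    rw [Finset.mem_powersetCard_univ]; exact hVcard
  -- g_V > 0
  have hprodV : 0 < ∏ i ∈ V, p i := by
    apply Finset.prod_pos
    intro i hi
    rcases Finset.mem_union.mp hi with h | h
    · rw [(Finset.mem_filter.mp h).2]; norm_num
    · exact ((Finset.mem_filter.mp (hWF h)).2).1
  have hprodVc : 0 < ∏ i ∈ Vᶜ, (1 - p i) := by
    apply Finset.prod_pos
    intro i hi
    have hiV : i ∉ V := Finset.mem_compl.mp hi
    have hiP : i ∉ P := fun h => hiV (Finset.mem_union_left _ h)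
    have : p i ≠ 1 := fun h => hiP (Finset.mem_filter.mpr ⟨Finset.mem_univ i, h⟩)
    have := lt_of_le_of_ne (hp i).2 this
    linarith
  have hsumVc : 0 < ∑ i ∈ Vᶜ, p i := by
    have hWlt : ∑ i ∈ W, p i < (W.card : ℝ) := by
      calc ∑ i ∈ W, p i < ∑ i ∈ W, (1:ℝ) := by
            apply Finset.sum_lt_sum_of_nonempty hWne
            intro i hi
            exact ((Finset.mem_filter.mp (hWF hi)).2).2
        _ = W.card := by rw [Finset.sum_const, nsmul_eq_mul, mul_one]
    have hVsum : ∑ i ∈ V, p i + ∑ i ∈ Vᶜ, p i = (k:ℝ) := by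
      rw [Finset.sum_add_sum_compl]; exact hsum
    have hVsum2 : ∑ i ∈ V, p i = (P.card : ℝ) + ∑ i ∈ W, p i := by
      rw [hVdef, Finset.sum_union hPW]
      congr 1
      rw [Finset.sum_congr rfl (fun i hi => (Finset.mem_filter.mp hi).2),
        Finset.sum_const, nsmul_eq_mul, mul_one]
    have : (P.card:ℝ) + (W.card:ℝ) = (k:ℝ) := by
      rw [hWcard, ← hdk]; push_cast; ring
    linarith
  have hgV : 0 < gSampford n k V p := by
    unfold gSampford
    have hnk : (0:ℝ) < (n:ℝ) - (k:ℝ) := by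
      have : (k:ℝ) < (n:ℝ) := by exact_mod_cast hkn
      linarith
    positivity
  apply Finset.sum_pos' (fun V' hV' => gS_nonneg hkn V' p hp) ⟨V, hVmem, hgV⟩

lemma final_est {n k : ℕ} (hkn : k < n) (U : Finset (Fin n)) (hU : U.card = k)
    (p : Fin n → ℝ) (hp : ∀ i, 0 ≤ p i ∧ p i ≤ 1) (hsum : ∑ i, p i = (k:ℝ))
    (t : ℝ) (ht0 : 0 ≤ t) (ht1 : t ≤ 1)
    (hR : t ^ 2 * gSampford n k U p ≤
      ∑ V ∈ (Finset.powersetCard k (Finset.univ : Finset (Fin n))).erase U, gSampford n k V p)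
    (hvert : p = eU U → t = 0) :
    1 / 2 * t ^ 2 ≤ 1 - fbar n k U p := by
  set R : ℝ := ∑ V ∈ (Finset.powersetCard k (Finset.univ : Finset (Fin n))).erase U,
    gSampford n k V p with hRdef
  unfold fbar
  split_ifs with h1 h2
  · rw [hvert h1]; norm_num
  · nlinarith
  · have hfr : ∃ i, 0 < p i ∧ p i < 1 := by
      by_contra hno
      push_neg at hno
      refine h2 (vertex_of_no_frac p hsum (fun i => ?_))
      rcases lt_or_eq_of_le (hp i).1 with hlt | heq
      · exact Or.inr (le_antisymm (hp i).2 (hno i hlt))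
      · exact Or.inl heq.symm
    have hs : 0 < sumg n k p := sumg_pos hkn p hp hsum hfr
    have hUmem : U ∈ Finset.powersetCard k (Finset.univ : Finset (Fin n)) :=
      Finset.mem_powersetCard_univ.mpr hU
    have hsplit : sumg n k p = gSampford n k U p + R := by
      rw [hRdef]
      exact (Finset.add_sum_erase _ _ hUmem).symm
    have hg0 : 0 ≤ gSampford n k U p := gS_nonneg hkn U p hp
    have hR0 : 0 ≤ R :=
      Finset.sum_nonneg (fun V _ => gS_nonneg hkn V p hp)
    have key : t ^ 2 * sumg n k p ≤ 2 * R := by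
      rw [hsplit]
      nlinarith [hR, mul_nonneg hR0 (show (0:ℝ) ≤ 1 - t ^ 2 by nlinarith)]
    have heq : 1 - gSampford n k U p / sumg n k p = R / sumg n k p := by
      rw [hsplit]
      have hne : gSampford n k U p + R ≠ 0 := by rw [← hsplit]; exact ne_of_gt hs
      field_simp
      ring
    rw [heq, le_div_iff₀ hs]
    linarith

theorem stmt16 (n k : ℕ) (hk : 1 ≤ k) (hkn : k < n)
    (U : Finset (Fin n)) (hU : U.card = k) :
    PolyBoundedOn (Ksimplex n k) (fun p => 1 - fbar n k U p) := by
  refine ⟨2, 1/2, by norm_num, ?_⟩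
  rintro A B hAB ⟨q, ⟨hqK, hqF⟩, hqpos⟩ p hpK
  have hp := hpK.1
  have hsump := hpK.2
  simp only []
  have hdich : (∃ j ∈ U, j ∉ B) ∨ (∃ j, j ∉ U ∧ j ∉ A) := by
    by_contra hcon
    push_neg at hcon
    obtain ⟨h1, h2⟩ := hcon
    have hqe : q = eU U := by
      funext i
      by_cases hiU : i ∈ U
      · simp only [eU, hiU, if_true]
        exact hqF.2.1 i (h1 i hiU)
      · simp only [eU, hiU, if_false]
        exact hqF.1 i (h2 i hiU)
    have hfb : fbar n k U q = 1 := by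
      unfold fbar
      rw [if_pos hqe]
    have hqpos' : 0 < 1 - fbar n k U q := hqpos
    rw [hfb] at hqpos'
    norm_num at hqpos'
  have hfp0 : 0 ≤ facePoly A B p := facePoly_nonneg A B p hp
  obtain ⟨j, hjU, hjB⟩ | ⟨j, hjU, hjA⟩ := hdich
  · -- t = 1 - p j
    have htf : facePoly A B p ≤ 1 - p j := facePoly_le_left A B hAB p hp hjB
    have ht0 : (0:ℝ) ≤ 1 - p j := by linarith [(hp j).2]
    have ht1 : 1 - p j ≤ 1 := by linarith [(hp j).1]
    have hg0 : 0 ≤ gSampford n k U p := gS_nonneg hkn U p hp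
    have hswap := swap_in (k := k) hkn U p hp hjU
    have hdom := sum_swaps_le hkn U p hp Uᶜ (fun i => insert i (U.erase j))
      (by
        intro i hi i' hi' heq
        have heq' : insert i (U.erase j) = insert i' (U.erase j) := heq
        have hi1 : i ∈ insert i' (U.erase j) := heq' ▸ Finset.mem_insert_self i _
        rcases Finset.mem_insert.mp hi1 with h | h
        · exact h
        · exact absurd (Finset.mem_of_mem_erase h) (Finset.mem_compl.mp hi))
      (by
        intro i hi
        have hiU : i ∉ U := Finset.mem_compl.mp hi
        have hie : i ∉ U.erase j := fun h => hiU (Finset.mem_of_mem_erase h)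
        refine Finset.mem_erase.mpr ⟨?_, Finset.mem_powersetCard_univ.mpr ?_⟩
        · intro hEq
          exact hiU (hEq ▸ Finset.mem_insert_self i _)
        · rw [Finset.card_insert_of_notMem hie, Finset.card_erase_of_mem hjU, hU]
          omega)
    have hR : (1 - p j) ^ 2 * gSampford n k U p ≤
        ∑ V ∈ (Finset.powersetCard k (Finset.univ : Finset (Fin n))).erase U,
          gSampford n k V p := by
      calc (1 - p j) ^ 2 * gSampford n k U p ≤ (1 - p j) * gSampford n k U p := by
            nlinarith [mul_nonneg (mul_nonneg ht0 hg0) (hp j).1]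
        _ ≤ _ := hswap
        _ ≤ _ := hdom
    have hmain := final_est hkn U hU p hp hsump (1 - p j) ht0 ht1 hR
      (by
        intro hpe
        rw [hpe]
        simp [eU, hjU])
    calc 1/2 * facePoly A B p ^ 2 ≤ 1/2 * (1 - p j) ^ 2 := by nlinarith
      _ ≤ 1 - fbar n k U p := hmain
  · -- t = p j
    have htf : facePoly A B p ≤ p j := facePoly_le_right A B hAB p hp hjA
    have ht0 : (0:ℝ) ≤ p j := (hp j).1
    have ht1 : p j ≤ 1 := (hp j).2
    have hswap := swap_out hkn U hU p hp hsump hjU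
    have hdom := sum_swaps_le hkn U p hp U (fun i => insert j (U.erase i))
      (by
        intro i hi i' hi' heq
        by_contra hne
        have heq' : insert j (U.erase i) = insert j (U.erase i') := heq
        have hi1 : i ∈ insert j (U.erase i) :=
          heq'.symm ▸ Finset.mem_insert_of_mem (Finset.mem_erase.mpr ⟨hne, hi⟩)
        rcases Finset.mem_insert.mp hi1 with h | h
        · exact hjU (h ▸ hi)
        · exact (Finset.mem_erase.mp h).1 rfl)
      (by
        intro i hi
        have hji : j ∉ U.erase i := fun h => hjU (Finset.mem_of_mem_erase h)
        refine Finset.mem_erase.mpr ⟨?_, Finset.mem_powersetCard_univ.mpr ?_⟩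
        · intro hEq
          exact hjU (hEq ▸ Finset.mem_insert_self j _)
        · rw [Finset.card_insert_of_notMem hji, Finset.card_erase_of_mem hi, hU]
          omega)
    have hR : (p j) ^ 2 * gSampford n k U p ≤
        ∑ V ∈ (Finset.powersetCard k (Finset.univ : Finset (Fin n))).erase U,
          gSampford n k V p := hswap.trans hdom
    have hmain := final_est hkn U hU p hp hsump (p j) ht0 ht1 hR
      (by
        intro hpe
        rw [hpe]
        simp [eU, hjU])
    calc 1/2 * facePoly A B p ^ 2 ≤ 1/2 * (p j) ^ 2 := by nlinarith
      _ ≤ 1 - fbar n k U p := hmain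
end

section
/- Let K be an affine subspace of ℝ^n and let P = [0,1]^n ∩ K be nonempty. Let v be an extreme point of P, and let F be a nonempty exposed face of P (i.e., F is nonempty and exposed in P) with v ∉ F whose affine dimension equals (affine dimension of P) − 1. Then there exists a coordinate i ∈ {1,…,n} such that either (v_i > 0 and x_i = 0 for all x ∈ F) or (v_i < 1 and x_i = 1 for all x ∈ F). -/
open Finset

lemma cube_convex (n : ℕ) : Convex ℝ (cube n) := by
  intro x hx y hy a b ha hb hab i
  simp only [Pi.add_apply, Pi.smul_apply, smul_eq_mul]
  constructor
  · have h1 := (hx i).1; have h2 := (hy i).1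
    nlinarith
  · have h1 := (hx i).2; have h2 := (hy i).2
    nlinarith

lemma avg_lemma {n : ℕ} (v : Fin n → ℝ) (F : Set (Fin n → ℝ)) (hF : Convex ℝ F)
    (hFc : F ⊆ cube n) (hFne : F.Nonempty)
    (H0 : ∀ i, 0 < v i → ∃ x ∈ F, 0 < x i)
    (H1 : ∀ i, v i < 1 → ∃ x ∈ F, x i < 1) :
    ∃ y ∈ F, ∀ i, (0 < v i → 0 < y i) ∧ (v i < 1 → y i < 1) := by
  classical
  have step : ∀ y ∈ F, ∀ i : Fin n, ∃ z ∈ F,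
      (∀ j, (0 < y j → 0 < z j) ∧ (y j < 1 → z j < 1)) ∧
      (0 < v i → 0 < z i) ∧ (v i < 1 → z i < 1) := by
    intro y hyF i
    obtain ⟨a, haF, hai⟩ : ∃ a ∈ F, (0 < v i → 0 < a i) := by
      by_cases h : 0 < v i
      · obtain ⟨a, h1, h2⟩ := H0 i h
        exact ⟨a, h1, fun _ => h2⟩
      · exact ⟨y, hyF, fun h' => absurd h' h⟩
    obtain ⟨b, hbF, hbi⟩ : ∃ b ∈ F, (v i < 1 → b i < 1) := by
      by_cases h : v i < 1
      · obtain ⟨b, h1, h2⟩ := H1 i h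
        exact ⟨b, h1, fun _ => h2⟩
      · exact ⟨y, hyF, fun h' => absurd h' h⟩
    set c : Fin n → ℝ := (1/2 : ℝ) • a + (1/2 : ℝ) • b with hc
    have hcF : c ∈ F := hF haF hbF (by norm_num) (by norm_num) (by norm_num)
    set z : Fin n → ℝ := (1/2 : ℝ) • y + (1/2 : ℝ) • c with hz
    have hzF : z ∈ F := hF hyF hcF (by norm_num) (by norm_num) (by norm_num)
    have hzj : ∀ j, z j = y j / 2 + a j / 4 + b j / 4 := by
      intro j
      simp only [hz, hc, Pi.add_apply, Pi.smul_apply, smul_eq_mul]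
      ring
    refine ⟨z, hzF, ?_, ?_, ?_⟩
    · intro j
      have hy0 := (hFc hyF j).1; have hy1 := (hFc hyF j).2
      have ha0 := (hFc haF j).1; have ha1 := (hFc haF j).2
      have hb0 := (hFc hbF j).1; have hb1 := (hFc hbF j).2
      rw [hzj j]
      constructor <;> intro h <;> nlinarith
    · intro h
      have := hai h
      have hy0 := (hFc hyF i).1; have hb0 := (hFc hbF i).1
      rw [hzj i]; nlinarith
    · intro h
      have := hbi h
      have hy1 := (hFc hyF i).2; have ha1 := (hFc haF i).2
      rw [hzj i]; nlinarith
  have key : ∀ s : Finset (Fin n), ∃ y ∈ F, ∀ i ∈ s,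
      (0 < v i → 0 < y i) ∧ (v i < 1 → y i < 1) := by
    intro s
    induction s using Finset.induction_on with
    | empty => exact ⟨hFne.choose, hFne.choose_spec, by simp⟩
    | @insert i s _ ih =>
      obtain ⟨y, hyF, hy⟩ := ih
      obtain ⟨z, hzF, hpres, hz0, hz1⟩ := step y hyF i
      refine ⟨z, hzF, ?_⟩
      intro j hj
      rcases Finset.mem_insert.1 hj with h | h
      · subst h; exact ⟨hz0, hz1⟩
      · exact ⟨fun hv' => (hpres j).1 ((hy j h).1 hv'),
          fun hv' => (hpres j).2 ((hy j h).2 hv')⟩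
  obtain ⟨y, hyF, hy⟩ := key Finset.univ
  exact ⟨y, hyF, fun i => hy i (Finset.mem_univ i)⟩

theorem stmt18 {n : ℕ} (K : AffineSubspace ℝ (Fin n → ℝ))
    (P : Set (Fin n → ℝ)) (hP : P = cube n ∩ (K : Set (Fin n → ℝ)))
    (hPne : P.Nonempty)
    (v : Fin n → ℝ) (hv : v ∈ Set.extremePoints ℝ P)
    (F : Set (Fin n → ℝ)) (hFexp : IsExposed ℝ P F) (hFne : F.Nonempty)
    (hvF : v ∉ F)
    (hdim : Module.finrank ℝ (affineSpan ℝ F).direction + 1 =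
      Module.finrank ℝ (affineSpan ℝ P).direction) :
    ∃ i : Fin n, (0 < v i ∧ ∀ x ∈ F, x i = 0) ∨ (v i < 1 ∧ ∀ x ∈ F, x i = 1) := by
  classical
  have hPcube : P ⊆ cube n := by rw [hP]; exact Set.inter_subset_left
  have hPK : P ⊆ (K : Set (Fin n → ℝ)) := by rw [hP]; exact Set.inter_subset_right
  have hPconv : Convex ℝ P := by
    rw [hP]; exact (cube_convex n).inter K.convex
  have hFsub : F ⊆ P := hFexp.subset
  have hFconv : Convex ℝ F := hFexp.convex hPconv
  have hvP : v ∈ P := hv.1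
  by_contra hcon
  push_neg at hcon
  have H0 : ∀ i, 0 < v i → ∃ x ∈ F, 0 < x i := by
    intro i h
    obtain ⟨x, hxF, hne⟩ := (hcon i).1 h
    exact ⟨x, hxF, lt_of_le_of_ne (hPcube (hFsub hxF) i).1 (Ne.symm hne)⟩
  have H1 : ∀ i, v i < 1 → ∃ x ∈ F, x i < 1 := by
    intro i h
    obtain ⟨x, hxF, hne⟩ := (hcon i).2 h
    exact ⟨x, hxF, lt_of_le_of_ne (hPcube (hFsub hxF) i).2 hne⟩
  obtain ⟨y, hyF, hy⟩ := avg_lemma v F hFconv (fun x hx => hPcube (hFsub hx)) hFne H0 H1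
  obtain ⟨l, hl⟩ := hFexp hFne
  have hyP : y ∈ P := hFsub hyF
  have hymax : ∀ z ∈ P, l z ≤ l y := by
    have := hyF; rw [hl] at this; exact this.2
  have hlv : l v < l y := by
    rw [hl, Set.mem_setOf_eq] at hvF
    push_neg at hvF
    obtain ⟨z, hzP, hz⟩ := hvF hvP
    exact lt_of_lt_of_le hz (hymax z hzP)
  -- define step size
  set g : Fin n → ℝ := fun i =>
    if y i < v i then y i / (v i - y i)
    else if v i < y i then (1 - y i) / (y i - v i) else 1 with hg
  set s : Finset ℝ := insert (1 : ℝ) (Finset.image g Finset.univ) with hs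
  have hsne : s.Nonempty := ⟨1, Finset.mem_insert_self _ _⟩
  set t : ℝ := s.min' hsne with htdef
  have hgpos : ∀ i, 0 < g i := by
    intro i
    have hy0 := (hPcube hyP i).1
    have hy1 := (hPcube hyP i).2
    rw [hg]
    by_cases h1 : y i < v i
    · simp only [h1, if_true]
      have hvpos : 0 < v i := lt_of_le_of_lt hy0 h1
      exact div_pos ((hy i).1 hvpos) (by linarith)
    · simp only [h1, if_false]
      by_cases h2 : v i < y i
      · simp only [h2, if_true]
        have hv1 : v i < 1 := lt_of_lt_of_le h2 hy1
        exact div_pos (by linarith [(hy i).2 hv1]) (by linarith)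
      · simp only [h2, if_false]; norm_num
  have ht0 : 0 < t := by
    rw [htdef]
    apply (Finset.lt_min'_iff s hsne).2
    intro b hb
    rcases Finset.mem_insert.1 hb with h | h
    · subst h; norm_num
    · obtain ⟨i, _, rfl⟩ := Finset.mem_image.1 h
      exact hgpos i
  have htg : ∀ i, t ≤ g i := fun i =>
    Finset.min'_le s _ (Finset.mem_insert_of_mem (Finset.mem_image_of_mem g (Finset.mem_univ i)))
  set w : Fin n → ℝ := t • (y - v) + y with hw
  have hwi : ∀ i, w i = t * (y i - v i) + y i := by
    intro i; simp [hw]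
  have hwcube : w ∈ cube n := by
    intro i
    have hy0 := (hPcube hyP i).1
    have hy1 := (hPcube hyP i).2
    have hv0 := (hPcube hvP i).1
    have hv1 := (hPcube hvP i).2
    rw [hwi i]
    rcases lt_trichotomy (y i) (v i) with h | h | h
    · have hgi : g i = y i / (v i - y i) := by rw [hg]; simp [h]
      have := htg i
      rw [hgi] at this
      have h2 : t * (v i - y i) ≤ y i := by
        rw [le_div_iff₀ (by linarith)] at this
        linarith
      constructor <;> nlinarith [ht0]
    · constructor <;> nlinarith [ht0]
    · have hgi : g i = (1 - y i) / (y i - v i) := by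
        rw [hg]; simp [h, not_lt.2 (le_of_lt h)]
      have := htg i
      rw [hgi] at this
      have h2 : t * (y i - v i) ≤ 1 - y i := by
        rw [le_div_iff₀ (by linarith)] at this
        linarith
      constructor <;> nlinarith [ht0]
  have hwK : w ∈ (K : Set (Fin n → ℝ)) := by
    have := K.smul_vsub_vadd_mem t (hPK hyP) (hPK hvP) (hPK hyP)
    simpa [hw, vsub_eq_sub, vadd_eq_add] using this
  have hwP : w ∈ P := by rw [hP]; exact ⟨hwcube, hwK⟩
  have hlw : l w = t * (l y - l v) + l y := by
    rw [hw]
    simp [map_add, map_smul, map_sub, smul_eq_mul]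
  have := hymax w hwP
  rw [hlw] at this
  nlinarith [ht0, hlv]
end

section
/- Let K = {(t, 1/2 − t) : t ∈ [0, 1/2]} ⊆ [0,1]², i.e., the convex hull of (1/2, 0) and (0, 1/2). There is no continuous function F : [0,1]² → [0,1] such that F(p) = p₁/(p₁ + p₂) for all p ∈ K and both F and 1 − F are polynomially bounded. -/
open Finset

/-- A function `f : [0,1]^n → [0,1]` is polynomially bounded. -/
def PolyBounded {n : ℕ} (f : (Fin n → ℝ) → ℝ) : Prop :=
  ∃ (m : ℕ) (c : ℝ), 0 < c ∧ ∀ A B : Finset (Fin n), Disjoint A B →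
    (¬ ∀ q ∈ face A B, f q = 0) →
    ∀ p ∈ cube n, c * facePoly A B p ^ m ≤ f p

theorem stmt19 :
    ¬ ∃ F : (Fin 2 → ℝ) → ℝ,
      ContinuousOn F (cube 2) ∧
      (∀ p ∈ cube 2, F p ∈ Set.Icc (0 : ℝ) 1) ∧
      (∀ p ∈ segment ℝ (![(1 : ℝ) / 2, 0]) (![0, (1 : ℝ) / 2]),
        F p = p 0 / (p 0 + p 1)) ∧
      PolyBounded F ∧ PolyBounded (fun p => 1 - F p) := by
  rintro ⟨F, hcont, hrange, hseg, ⟨m1, c1, hc1, hb1⟩, ⟨m2, c2, hc2, hb2⟩⟩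
  -- the two special points
  set a : Fin 2 → ℝ := ![0, 1/2] with ha_def
  set b : Fin 2 → ℝ := ![1/2, 0] with hb_def
  have ha_cube : a ∈ cube 2 := by intro i; fin_cases i <;> norm_num [ha_def]
  have hb_cube : b ∈ cube 2 := by intro i; fin_cases i <;> norm_num [hb_def]
  have hFa : F a = 0 := by
    have := hseg a (right_mem_segment ℝ _ _)
    simpa [ha_def] using this
  have hFb : F b = 1 := by
    have := hseg b (left_mem_segment ℝ _ _)
    simp [hb_def] at this
    norm_num at this
    exact this
  -- F vanishes on the face {(0,t) : 0<t<1}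
  have hface1 : ∀ q ∈ face ({0} : Finset (Fin 2)) ∅, F q = 0 := by
    by_contra h
    have hle := hb1 {0} ∅ (Finset.disjoint_empty_right _) h a ha_cube
    have hfp : facePoly ({0} : Finset (Fin 2)) ∅ a = 1/4 := by
      have h0 : (({0} : Finset (Fin 2)))ᶜ = {1} := by decide
      simp [facePoly, h0, ha_def]; norm_num
    rw [hfp, hFa] at hle
    have : (0:ℝ) < c1 * (1/4) ^ m1 := by positivity
    linarith
  -- 1 - F vanishes on the face {(t,0) : 0<t<1}
  have hface2 : ∀ q ∈ face ({1} : Finset (Fin 2)) ∅, 1 - F q = 0 := by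
    by_contra h
    have hle := hb2 {1} ∅ (Finset.disjoint_empty_right _) h b hb_cube
    have hfp : facePoly ({1} : Finset (Fin 2)) ∅ b = 1/4 := by
      have h0 : (({1} : Finset (Fin 2)))ᶜ = {0} := by decide
      simp [facePoly, h0, hb_def]; norm_num
    rw [hfp] at hle
    simp only [hFb] at hle
    have : (0:ℝ) < c2 * (1/4) ^ m2 := by positivity
    linarith
  -- membership lemmas
  have hmem1 : ∀ t : ℝ, 0 < t → t < 1 → ![(0:ℝ), t] ∈ face ({0} : Finset (Fin 2)) ∅ := by
    intro t ht ht1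
    refine ⟨?_, ?_, ?_⟩
    · intro i hi; fin_cases hi; simp
    · intro i hi; simp at hi
    · intro i hi
      fin_cases i
      · simp at hi
      · simpa using ⟨ht, ht1⟩
  have hmem2 : ∀ t : ℝ, 0 < t → t < 1 → ![t, (0:ℝ)] ∈ face ({1} : Finset (Fin 2)) ∅ := by
    intro t ht ht1
    refine ⟨?_, ?_, ?_⟩
    · intro i hi; fin_cases hi; simp
    · intro i hi; simp at hi
    · intro i hi
      fin_cases i
      · simpa using ⟨ht, ht1⟩
      · simp at hi
  have hmemc1 : ∀ t : ℝ, 0 ≤ t → t ≤ 1 → ![(0:ℝ), t] ∈ cube 2 := by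
    intro t ht ht1 i; fin_cases i <;> simp [ht, ht1]
  have hmemc2 : ∀ t : ℝ, 0 ≤ t → t ≤ 1 → ![t, (0:ℝ)] ∈ cube 2 := by
    intro t ht ht1 i; fin_cases i <;> simp [ht, ht1]
  -- continuity at origin
  have hzero : (fun i : Fin 2 => (0:ℝ)) ∈ cube 2 := by intro i; norm_num
  have hcw : ContinuousWithinAt F (cube 2) (fun _ => 0) := hcont _ hzero
  have hpt : (![(0:ℝ),(0:ℝ)]) = (fun _ : Fin 2 => (0:ℝ)) := by
    funext i; fin_cases i <;> simp
  have hIoo : Set.Ioo (0:ℝ) 1 ∈ nhdsWithin (0:ℝ) (Set.Ioi 0) :=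
    Ioo_mem_nhdsGT_of_mem ⟨le_refl 0, by norm_num⟩
  have hpath1 : Filter.Tendsto (fun t : ℝ => ![(0:ℝ), t]) (nhdsWithin (0:ℝ) (Set.Ioi 0))
      (nhdsWithin (fun _ => 0) (cube 2)) := by
    apply tendsto_nhdsWithin_of_tendsto_nhds_of_eventually_within
    · have hc : Continuous (fun t : ℝ => ![(0:ℝ), t]) := by
        apply continuous_pi; intro i; fin_cases i
        · simpa using continuous_const
        · simpa using continuous_id'
      have h := (hc.tendsto 0).mono_left (nhdsWithin_le_nhds (s := Set.Ioi (0:ℝ)))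
      simpa [hpt] using h
    · filter_upwards [hIoo] with t ht; exact hmemc1 t ht.1.le ht.2.le
  have hpath2 : Filter.Tendsto (fun t : ℝ => ![t, (0:ℝ)]) (nhdsWithin (0:ℝ) (Set.Ioi 0))
      (nhdsWithin (fun _ => 0) (cube 2)) := by
    apply tendsto_nhdsWithin_of_tendsto_nhds_of_eventually_within
    · have hc : Continuous (fun t : ℝ => ![t, (0:ℝ)]) := by
        apply continuous_pi; intro i; fin_cases i
        · simpa using continuous_id'
        · simpa using continuous_const
      have h := (hc.tendsto 0).mono_left (nhdsWithin_le_nhds (s := Set.Ioi (0:ℝ)))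
      simpa [hpt] using h
    · filter_upwards [hIoo] with t ht; exact hmemc2 t ht.1.le ht.2.le
  have h1 : Filter.Tendsto (F ∘ fun t : ℝ => ![(0:ℝ), t]) (nhdsWithin (0:ℝ) (Set.Ioi 0))
      (nhds (F fun _ => 0)) := hcw.tendsto.comp hpath1
  have h2 : Filter.Tendsto (F ∘ fun t : ℝ => ![t, (0:ℝ)]) (nhdsWithin (0:ℝ) (Set.Ioi 0))
      (nhds (F fun _ => 0)) := hcw.tendsto.comp hpath2
  have h1' : Filter.Tendsto (F ∘ fun t : ℝ => ![(0:ℝ), t]) (nhdsWithin (0:ℝ) (Set.Ioi 0))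
      (nhds 0) := by
    apply Filter.Tendsto.congr' _ tendsto_const_nhds
    filter_upwards [hIoo] with t ht
    exact (hface1 _ (hmem1 t ht.1 ht.2)).symm
  have h2' : Filter.Tendsto (F ∘ fun t : ℝ => ![t, (0:ℝ)]) (nhdsWithin (0:ℝ) (Set.Ioi 0))
      (nhds 1) := by
    apply Filter.Tendsto.congr' _ tendsto_const_nhds
    filter_upwards [hIoo] with t ht
    have := hface2 _ (hmem2 t ht.1 ht.2)
    simp only [Function.comp]
    linarith
  have e1 : F (fun _ => 0) = 0 := tendsto_nhds_unique h1 h1'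
  have e2 : F (fun _ => 0) = 1 := tendsto_nhds_unique h2 h2'
  linarith
end
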